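/- In A ⊗ A one has the identity R² = (1/N) Σ_{j,k=0}^{N−1} t^{−2jk} K^{2j} ⊗ K^{2k}. -/

import Mathlib

open Finset TensorProduct

noncomputable section

/-- The quantum group `U_t(u(1)) = ℂ[ℤ_{2N}]`, the complex group algebra of the cyclic group
`ℤ_{2N}`. -/
abbrev QG (N : ℕ) := MonoidAlgebra ℂ (Multiplicative (ZMod (2 * N)))

/-- The basis element `K^j`, `j ∈ ℤ_{2N}` (`K` is the image of the fixed generator `1`). -/
def KK (N : ℕ) (j : ZMod (2 * N)) : QG N :=
  MonoidAlgebra.single (Multiplicative.ofAdd j) 1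

/-- `t = exp(πi/N)`, a primitive `2N`-th root of unity. -/
def tq (N : ℕ) : ℂ := Complex.exp ((Real.pi : ℂ) * Complex.I / N)

/-- The universal `R`-matrix `R = (1/2N) Σ_{j,k ∈ ℤ_{2N}} t^{−jk} K^j ⊗ K^k`. -/
def Rmat (N : ℕ) : QG N ⊗[ℂ] QG N :=
  (2 * (N : ℂ))⁻¹ • ∑ j ∈ Finset.range (2 * N), ∑ k ∈ Finset.range (2 * N),
    tq N ^ (-((j : ℤ) * (k : ℤ))) • (KK N (j : ZMod (2 * N)) ⊗ₜ[ℂ] KK N (k : ZMod (2 * N)))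

-- helpers
def chiN (N : ℕ) (m : ZMod (2 * N)) : ℂ := tq N ^ m.val

variable {N : ℕ}

lemma tq_ne_zero : tq N ≠ 0 := Complex.exp_ne_zero _

lemma tq_prim (hpos : 0 < N) : IsPrimitiveRoot (tq N) (2 * N) := by
  have h := Complex.isPrimitiveRoot_exp (2 * N) (by omega)
  have hN : (N : ℂ) ≠ 0 := Nat.cast_ne_zero.2 hpos.ne'
  have : (2 * Real.pi * Complex.I / ((2 * N : ℕ) : ℂ)) = (Real.pi : ℂ) * Complex.I / N := by
    push_cast
    field_simp
  rwa [this] at h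
  
lemma tq_pow_2N (hpos : 0 < N) : tq N ^ (2 * N) = 1 := (tq_prim hpos).pow_eq_one

lemma chi_zero (hpos : 0 < N) : chiN N 0 = 1 := by
  haveI : NeZero (2 * N) := ⟨by omega⟩
  simp [chiN, ZMod.val_zero]

lemma chi_add (hpos : 0 < N) (a b : ZMod (2 * N)) :
    chiN N (a + b) = chiN N a * chiN N b := by
  haveI : NeZero (2 * N) := ⟨by omega⟩
  unfold chiN
  rw [ZMod.val_add, ← pow_eq_pow_mod _ (tq_pow_2N hpos), pow_add]

lemma chi_natmul (hpos : 0 < N) (m : ℕ) (c : ZMod (2 * N)) :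
    chiN N ((m : ZMod (2 * N)) * c) = chiN N c ^ m := by
  induction m with
  | zero => simpa using chi_zero hpos
  | succ m ih =>
    push_cast
    rw [add_mul, one_mul, chi_add hpos, ih, pow_succ]

lemma tq_zpow (hpos : 0 < N) (x : ℤ) :
    tq N ^ x = chiN N ((x : ZMod (2 * N))) := by
  haveI : NeZero (2 * N) := ⟨by omega⟩
  obtain ⟨q, hq⟩ : ((2 * N : ℕ) : ℤ) ∣ x - (((x : ZMod (2 * N)).val : ℕ) : ℤ) := by
    rw [← ZMod.intCast_zmod_eq_zero_iff_dvd]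
    push_cast
    rw [ZMod.natCast_val, ZMod.cast_id]
    ring
  have hx : x = (((x : ZMod (2 * N)).val : ℕ) : ℤ) + ((2 * N : ℕ) : ℤ) * q := by linarith
  conv_lhs => rw [hx, zpow_add₀ tq_ne_zero, zpow_natCast]
  have : tq N ^ (((2 * N : ℕ) : ℤ) * q) = 1 := by
    rw [zpow_mul, zpow_natCast, tq_pow_2N hpos, one_zpow]
  rw [this, mul_one]
  rfl

lemma sum_univ_zmod [NeZero (2 * N)] {M : Type*} [AddCommMonoid M] (f : ZMod (2 * N) → M) :
    ∑ a : ZMod (2 * N), f a = ∑ m ∈ range (2 * N), f ((m : ℕ) : ZMod (2 * N)) := by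
  refine Finset.sum_nbij' (fun a => a.val) (fun m => ((m : ℕ) : ZMod (2 * N))) ?_ ?_ ?_ ?_ ?_
  · intro a _; exact Finset.mem_range.2 (ZMod.val_lt a)
  · intro m _; exact Finset.mem_univ _
  · intro a _; simp [ZMod.natCast_val, ZMod.cast_id]
  · intro m hm; exact ZMod.val_natCast_of_lt (Finset.mem_range.1 hm)
  · intro a _; congr 1; simp [ZMod.natCast_val, ZMod.cast_id]

lemma sum_chi [NeZero (2 * N)] (hpos : 0 < N) (c : ZMod (2 * N)) :
    ∑ k : ZMod (2 * N), chiN N (k * c) = if c = 0 then ((2 * N : ℕ) : ℂ) else 0 := by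
  rw [sum_univ_zmod]
  rw [Finset.sum_congr rfl fun m _ => chi_natmul hpos m c]
  by_cases hc : c = 0
  · simp [hc, chi_zero hpos]
  · rw [if_neg hc]
    have h1 : chiN N c ≠ 1 := by
      intro h
      have := ((tq_prim hpos).pow_eq_one_iff_dvd c.val).1 h
      exact hc (by
        have := Nat.eq_zero_of_dvd_of_lt this (ZMod.val_lt c) |>.symm ▸ this
        have hv : c.val = 0 := Nat.eq_zero_of_dvd_of_lt ‹2 * N ∣ c.val› (ZMod.val_lt c)
        exact (ZMod.val_eq_zero c).1 hv)
    rw [geom_sum_eq h1]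
    have : chiN N c ^ (2 * N) = 1 := by
      rw [← chi_natmul hpos (2 * N) c, ZMod.natCast_self, zero_mul, chi_zero hpos]
    rw [this, sub_self, zero_div]

lemma sum_range_two_mul' {M : Type*} [AddCommMonoid M] (n : ℕ) (f : ℕ → M) :
    ∑ m ∈ range (2 * n), f m = ∑ k ∈ range n, (f (2 * k) + f (2 * k + 1)) := by
  induction n with
  | zero => simp
  | succ n ih =>
    rw [show 2 * (n + 1) = 2 * n + 1 + 1 by ring, Finset.sum_range_succ, Finset.sum_range_succ,
      ih, Finset.sum_range_succ, add_assoc]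

lemma KK_mul (a b : ZMod (2 * N)) : KK N a * KK N b = KK N (a + b) := by
  unfold KK
  rw [MonoidAlgebra.single_mul_single, one_mul, ← ofAdd_add]

lemma key [NeZero (2 * N)] (hpos : 0 < N) :
    ∑ j : ZMod (2 * N), ∑ k : ZMod (2 * N), ∑ a : ZMod (2 * N), ∑ b : ZMod (2 * N),
      (chiN N (-(j * k)) * chiN N (-(a * b))) • (KK N (j + a) ⊗ₜ[ℂ] KK N (k + b))
    = ((2 * N : ℕ) : ℂ) • ∑ j : ZMod (2 * N), ∑ b : ZMod (2 * N),
        chiN N (-(j * b)) • (KK N (2 * j) ⊗ₜ[ℂ] KK N b) := by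
  calc
    ∑ j : ZMod (2 * N), ∑ k : ZMod (2 * N), ∑ a : ZMod (2 * N), ∑ b : ZMod (2 * N),
      (chiN N (-(j * k)) * chiN N (-(a * b))) • (KK N (j + a) ⊗ₜ[ℂ] KK N (k + b))
      = ∑ j : ZMod (2 * N), ∑ k : ZMod (2 * N), ∑ a : ZMod (2 * N), ∑ b : ZMod (2 * N),
        (chiN N (-(j * k)) * chiN N (-((a - j) * (b - k)))) •
          (KK N (j + (a - j)) ⊗ₜ[ℂ] KK N (k + (b - k))) := by
        refine sum_congr rfl fun j _ => sum_congr rfl fun k _ => ?_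
        rw [← Equiv.sum_comp (Equiv.subRight j) (fun a => ∑ b : ZMod (2 * N),
          (chiN N (-(j * k)) * chiN N (-(a * b))) • (KK N (j + a) ⊗ₜ[ℂ] KK N (k + b)))]
        refine sum_congr rfl fun a _ => ?_
        rw [← Equiv.sum_comp (Equiv.subRight k) (fun b =>
          (chiN N (-(j * k)) * chiN N (-((Equiv.subRight j a) * b))) •
            (KK N (j + Equiv.subRight j a) ⊗ₜ[ℂ] KK N (k + b)))]
        simp only [Equiv.subRight_apply]
    _ = ∑ j : ZMod (2 * N), ∑ k : ZMod (2 * N), ∑ a : ZMod (2 * N), ∑ b : ZMod (2 * N),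
        (chiN N (-(a * b) + j * b) * chiN N (k * (a - 2 * j))) • (KK N a ⊗ₜ[ℂ] KK N b) := by
        refine sum_congr rfl fun j _ => sum_congr rfl fun k _ => sum_congr rfl fun a _ =>
          sum_congr rfl fun b _ => ?_
        rw [show j + (a - j) = a by ring, show k + (b - k) = b by ring]
        congr 1
        rw [← chi_add hpos, ← chi_add hpos]
        congr 1
        ring
    _ = ∑ j : ZMod (2 * N), ∑ a : ZMod (2 * N), ∑ b : ZMod (2 * N), ∑ k : ZMod (2 * N),
        (chiN N (-(a * b) + j * b) * chiN N (k * (a - 2 * j))) • (KK N a ⊗ₜ[ℂ] KK N b) := by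
        refine sum_congr rfl fun j _ => ?_
        rw [Finset.sum_comm]
        exact sum_congr rfl fun a _ => Finset.sum_comm
    _ = ∑ j : ZMod (2 * N), ∑ a : ZMod (2 * N), ∑ b : ZMod (2 * N),
        (if a = 2 * j then (((2 * N : ℕ) : ℂ) * chiN N (-(a * b) + j * b)) •
          (KK N a ⊗ₜ[ℂ] KK N b) else 0) := by
        refine sum_congr rfl fun j _ => sum_congr rfl fun a _ => sum_congr rfl fun b _ => ?_
        rw [← Finset.sum_smul, ← Finset.mul_sum, sum_chi hpos]
        simp only [sub_eq_zero, mul_ite, mul_zero, ite_smul, zero_smul,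
          mul_comm (chiN N (-(a * b) + j * b)) (((2 * N : ℕ) : ℂ))]
    _ = ∑ j : ZMod (2 * N), ∑ b : ZMod (2 * N),
        (((2 * N : ℕ) : ℂ) * chiN N (-(2 * j * b) + j * b)) • (KK N (2 * j) ⊗ₜ[ℂ] KK N b) := by
        refine sum_congr rfl fun j _ => ?_
        rw [Finset.sum_comm]
        refine sum_congr rfl fun b _ => ?_
        rw [Finset.sum_ite_eq' univ (2 * j) (fun a =>
          (((2 * N : ℕ) : ℂ) * chiN N (-(a * b) + j * b)) • (KK N a ⊗ₜ[ℂ] KK N b)),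
          if_pos (mem_univ _)]
    _ = ((2 * N : ℕ) : ℂ) • ∑ j : ZMod (2 * N), ∑ b : ZMod (2 * N),
        chiN N (-(j * b)) • (KK N (2 * j) ⊗ₜ[ℂ] KK N b) := by
        rw [Finset.smul_sum]
        refine sum_congr rfl fun j _ => ?_
        rw [Finset.smul_sum]
        refine sum_congr rfl fun b _ => ?_
        rw [show -(2 * j * b) + j * b = -(j * b) by ring, mul_smul]

lemma Rzmod [NeZero (2 * N)] (hpos : 0 < N) :
    Rmat N = (2 * (N : ℂ))⁻¹ • ∑ j : ZMod (2 * N), ∑ k : ZMod (2 * N),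
      chiN N (-(j * k)) • (KK N j ⊗ₜ[ℂ] KK N k) := by
  unfold Rmat
  congr 1
  rw [sum_univ_zmod (f := fun j => ∑ k : ZMod (2 * N), chiN N (-(j * k)) • (KK N j ⊗ₜ[ℂ] KK N k))]
  refine sum_congr rfl fun j _ => ?_
  rw [sum_univ_zmod (f := fun k => chiN N (-(((j : ℕ) : ZMod (2 * N)) * k)) •
    (KK N ((j : ℕ) : ZMod (2 * N)) ⊗ₜ[ℂ] KK N k))]
  refine sum_congr rfl fun k _ => ?_
  rw [tq_zpow hpos]
  congr 2
  push_cast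
  ring

lemma expand [NeZero (2 * N)] :
    (∑ j : ZMod (2 * N), ∑ k : ZMod (2 * N), chiN N (-(j * k)) • (KK N j ⊗ₜ[ℂ] KK N k)) *
      (∑ a : ZMod (2 * N), ∑ b : ZMod (2 * N), chiN N (-(a * b)) • (KK N a ⊗ₜ[ℂ] KK N b))
    = ∑ j : ZMod (2 * N), ∑ k : ZMod (2 * N), ∑ a : ZMod (2 * N), ∑ b : ZMod (2 * N),
        (chiN N (-(j * k)) * chiN N (-(a * b))) • (KK N (j + a) ⊗ₜ[ℂ] KK N (k + b)) := by
  rw [Finset.sum_mul_sum]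
  refine sum_congr rfl fun j _ => ?_
  rw [Finset.sum_comm]
  refine sum_congr rfl fun k _ => ?_
  rw [Finset.sum_mul]
  refine sum_congr rfl fun a _ => ?_
  rw [Finset.mul_sum]
  refine sum_congr rfl fun b _ => ?_
  rw [smul_mul_smul_comm, Algebra.TensorProduct.tmul_mul_tmul, KK_mul, KK_mul]

lemma tq_pow_N (hpos : 0 < N) : tq N ^ N = -1 := by
  have hN : (N : ℂ) ≠ 0 := Nat.cast_ne_zero.2 hpos.ne'
  rw [tq, ← Complex.exp_nat_mul]
  rw [show (N : ℂ) * ((Real.pi : ℂ) * Complex.I / N) = (Real.pi : ℂ) * Complex.I by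
    field_simp]
  exact Complex.exp_pi_mul_I

lemma chi_N_mul (hpos : 0 < N) (n : ℕ) :
    chiN N ((N : ZMod (2 * N)) * ((n : ℕ) : ZMod (2 * N))) = (-1 : ℂ) ^ n := by
  rw [mul_comm, chi_natmul hpos]
  have : chiN N ((N : ℕ) : ZMod (2 * N)) = -1 := by
    unfold chiN
    rw [ZMod.val_natCast_of_lt (by omega), tq_pow_N hpos]
  rw [this]

lemma neg_N_eq (hpos : 0 < N) : -((N : ℕ) : ZMod (2 * N)) = ((N : ℕ) : ZMod (2 * N)) := by
  have h : ((N : ℕ) : ZMod (2 * N)) + ((N : ℕ) : ZMod (2 * N)) = 0 := by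
    have := ZMod.natCast_self (2 * N)
    push_cast at this
    linear_combination this
  exact neg_eq_of_add_eq_zero_left h

lemma eval [NeZero (2 * N)] (hpos : 0 < N) :
    ∑ j : ZMod (2 * N), ∑ b : ZMod (2 * N), chiN N (-(j * b)) • (KK N (2 * j) ⊗ₜ[ℂ] KK N b)
    = (2 : ℂ) • ∑ k ∈ range N, ∑ m ∈ range N,
        chiN N (-(((m : ℕ) : ZMod (2 * N)) * ((2 * k : ℕ) : ZMod (2 * N)))) •
          (KK N (2 * ((m : ℕ) : ZMod (2 * N))) ⊗ₜ[ℂ] KK N ((2 * k : ℕ) : ZMod (2 * N))) := by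
  have hneg := neg_N_eq hpos
  calc
    ∑ j : ZMod (2 * N), ∑ b : ZMod (2 * N), chiN N (-(j * b)) • (KK N (2 * j) ⊗ₜ[ℂ] KK N b)
      = ∑ b : ZMod (2 * N), ∑ j : ZMod (2 * N), chiN N (-(j * b)) • (KK N (2 * j) ⊗ₜ[ℂ] KK N b) :=
        Finset.sum_comm
    _ = ∑ n ∈ range (2 * N), ∑ m ∈ range (2 * N),
        chiN N (-(((m : ℕ) : ZMod (2 * N)) * ((n : ℕ) : ZMod (2 * N)))) •
          (KK N (2 * ((m : ℕ) : ZMod (2 * N))) ⊗ₜ[ℂ] KK N ((n : ℕ) : ZMod (2 * N))) := by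
        rw [sum_univ_zmod (f := fun b => ∑ j : ZMod (2 * N),
          chiN N (-(j * b)) • (KK N (2 * j) ⊗ₜ[ℂ] KK N b))]
        refine sum_congr rfl fun n _ => ?_
        rw [sum_univ_zmod (f := fun j => chiN N (-(j * ((n : ℕ) : ZMod (2 * N)))) •
          (KK N (2 * j) ⊗ₜ[ℂ] KK N ((n : ℕ) : ZMod (2 * N))))]
    _ = ∑ n ∈ range (2 * N), ∑ m ∈ range N,
        ((1 + (-1 : ℂ) ^ n) * chiN N (-(((m : ℕ) : ZMod (2 * N)) * ((n : ℕ) : ZMod (2 * N))))) •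
          (KK N (2 * ((m : ℕ) : ZMod (2 * N))) ⊗ₜ[ℂ] KK N ((n : ℕ) : ZMod (2 * N))) := by
        refine sum_congr rfl fun n _ => ?_
        rw [show range (2 * N) = range (N + N) by rw [two_mul], Finset.sum_range_add,
          ← Finset.sum_add_distrib]
        refine sum_congr rfl fun m _ => ?_
        have h2m : 2 * (((N + m : ℕ)) : ZMod (2 * N)) = 2 * ((m : ℕ) : ZMod (2 * N)) := by
          have h0 := ZMod.natCast_self (2 * N)
          push_cast at h0 ⊢
          linear_combination h0
        have hco : chiN N (-((((N + m : ℕ)) : ZMod (2 * N)) * ((n : ℕ) : ZMod (2 * N))))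
            = (-1 : ℂ) ^ n *
              chiN N (-(((m : ℕ) : ZMod (2 * N)) * ((n : ℕ) : ZMod (2 * N)))) := by
          have harg : -((((N + m : ℕ)) : ZMod (2 * N)) * ((n : ℕ) : ZMod (2 * N)))
              = ((N : ℕ) : ZMod (2 * N)) * ((n : ℕ) : ZMod (2 * N)) +
                -(((m : ℕ) : ZMod (2 * N)) * ((n : ℕ) : ZMod (2 * N))) := by
            push_cast
            linear_combination ((n : ℕ) : ZMod (2 * N)) * hneg
          rw [harg, chi_add hpos, chi_N_mul hpos n]
        rw [h2m, hco, ← add_smul]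
        congr 1
        ring
    _ = ∑ k ∈ range N, ∑ m ∈ range N,
        ((2 : ℂ) * chiN N (-(((m : ℕ) : ZMod (2 * N)) * ((2 * k : ℕ) : ZMod (2 * N))))) •
          (KK N (2 * ((m : ℕ) : ZMod (2 * N))) ⊗ₜ[ℂ] KK N ((2 * k : ℕ) : ZMod (2 * N))) := by
        rw [sum_range_two_mul' N]
        refine sum_congr rfl fun k _ => ?_
        have hodd : (1 + (-1 : ℂ) ^ (2 * k + 1)) = 0 := by
          rw [pow_succ, pow_mul]
          norm_num
        have heven : (1 + (-1 : ℂ) ^ (2 * k)) = 2 := by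
          rw [pow_mul]
          norm_num
        simp only [hodd, heven, zero_mul, zero_smul, Finset.sum_const_zero, add_zero]
    _ = (2 : ℂ) • ∑ k ∈ range N, ∑ m ∈ range N,
        chiN N (-(((m : ℕ) : ZMod (2 * N)) * ((2 * k : ℕ) : ZMod (2 * N)))) •
          (KK N (2 * ((m : ℕ) : ZMod (2 * N))) ⊗ₜ[ℂ] KK N ((2 * k : ℕ) : ZMod (2 * N))) := by
        rw [Finset.smul_sum]
        refine sum_congr rfl fun k _ => ?_
        rw [Finset.smul_sum]
        exact sum_congr rfl fun m _ => mul_smul _ _ _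


/-- In `A ⊗ A` one has `R² = (1/N) Σ_{j,k=0}^{N−1} t^{−2jk} K^{2j} ⊗ K^{2k}`. -/
theorem stmt_11 (N : ℕ) (hpos : 0 < N) (hN : Even N) :
    Rmat N * Rmat N
      = (N : ℂ)⁻¹ • ∑ j ∈ Finset.range N, ∑ k ∈ Finset.range N,
          tq N ^ (-(2 * (j : ℤ) * (k : ℤ))) •
            (KK N ((2 * j : ℕ) : ZMod (2 * N)) ⊗ₜ[ℂ] KK N ((2 * k : ℕ) : ZMod (2 * N))) := by
  haveI : NeZero (2 * N) := ⟨by omega⟩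
  rw [Rzmod hpos, smul_mul_smul_comm, expand, key hpos, eval hpos, smul_smul, smul_smul]
  have hNc : (N : ℂ) ≠ 0 := Nat.cast_ne_zero.2 hpos.ne'
  have hsc : (2 * (N : ℂ))⁻¹ * (2 * (N : ℂ))⁻¹ * ((2 * N : ℕ) : ℂ) * 2 = (N : ℂ)⁻¹ := by
    push_cast
    field_simp
  rw [hsc, Finset.sum_comm]
  congr 1
  refine sum_congr rfl fun j _ => sum_congr rfl fun k _ => ?_
  have h1 : chiN N (((-(2 * (j : ℤ) * (k : ℤ))) : ℤ) : ZMod (2 * N))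
      = chiN N (-(((j : ℕ) : ZMod (2 * N)) * ((2 * k : ℕ) : ZMod (2 * N)))) := by
    congr 1
    push_cast
    ring
  have h2 : KK N (2 * ((j : ℕ) : ZMod (2 * N))) = KK N (((2 * j : ℕ) : ZMod (2 * N))) := by
    congr 1
    push_cast
    ring
  rw [tq_zpow hpos, h1, h2]; try rfl
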